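/- Let L ⊆ Σ* and let D be a DFA accepting exactly L, with initial state s; write q·w for evalFrom(q,w). Suppose there exist states q, q₁, q₂ and words ω, x, y, z ∈ Σ* such that: s·ω = q; q·x = q₁ and q·y = q₂; q₁·x = q₁ and q₁·y = q₁; q₂·x = q₂ and q₂·y = q₂; and exactly one of the states q₁·z, q₂·z is accepting (so L is of type (*′)). Then L is not recognized by any PRA-C with any interval. -/

import Mathlib

/-- A real square matrix is doubly stochastic if all entries are nonnegative and
every row and every column sums to 1. -/
def DoublyStochastic {n : ℕ} (A : Matrix (Fin n) (Fin n) ℝ) : Prop :=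
  (∀ i j, 0 ≤ A i j) ∧ (∀ i, ∑ j, A i j = 1) ∧ (∀ j, ∑ i, A i j = 1)

/-- A 1-way probabilistic reversible C-automaton (PRA-C) over input alphabet `α`:
a finite state set `Fin n`, an initial state, a set of accepting states, and
a doubly stochastic matrix for each symbol of the working alphabet
(the letters of `α` together with the end-markers `#` and `$`). -/
structure PRAC (α : Type) where
  n : ℕ
  q0 : Fin n
  F : Finset (Fin n)
  V : α → Matrix (Fin n) (Fin n) ℝ
  Vhash : Matrix (Fin n) (Fin n) ℝ
  Vdollar : Matrix (Fin n) (Fin n) ℝ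
  ds : ∀ a, DoublyStochastic (V a)
  ds_hash : DoublyStochastic Vhash
  ds_dollar : DoublyStochastic Vdollar

namespace PRAC

variable {α : Type}

/-- Acceptance probability of a word `w = σ₁…σ_k`: the total mass on accepting states of
`V_$ ⬝ V_{σ_k} ⬝ ⋯ ⬝ V_{σ₁} ⬝ V_# ⬝ e_{q₀}`. -/
def accProb (A : PRAC α) (w : List α) : ℝ :=
  ∑ q ∈ A.F,
    (A.Vdollar.mulVec
      (w.foldl (fun v a => (A.V a).mulVec v) (A.Vhash.mulVec (Pi.single A.q0 1)))) q

/-- Recognition of a language with interval `(p₁, p₂)`. -/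
def Recognizes (A : PRAC α) (L : Set (List α)) (p1 p2 : ℝ) : Prop :=
  0 ≤ p1 ∧ p1 < p2 ∧ p2 ≤ 1 ∧
  (∀ w ∈ L, p2 ≤ A.accProb w) ∧ (∀ w ∉ L, A.accProb w ≤ p1)

/-- Recognition with probability `p`, i.e. with interval `(1 - p, p)`. -/
def RecognizesWithProb (A : PRAC α) (L : Set (List α)) (p : ℝ) : Prop :=
  A.Recognizes L (1 - p) p

end PRAC

/- ### Auxiliary material for the proof -/

namespace PRACAux

open Matrix

variable {n : ℕ}

theorem ds_one : DoublyStochastic (1 : Matrix (Fin n) (Fin n) ℝ) := by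
  refine ⟨fun i j => ?_, fun i => ?_, fun j => ?_⟩
  · by_cases h : i = j <;> simp [Matrix.one_apply, h]
  · simp [Matrix.one_apply]
  · simp [Matrix.one_apply, Finset.sum_ite_eq]

theorem ds_mul {A B : Matrix (Fin n) (Fin n) ℝ} (hA : DoublyStochastic A)
    (hB : DoublyStochastic B) : DoublyStochastic (A * B) := by
  obtain ⟨hA0, hAr, hAc⟩ := hA
  obtain ⟨hB0, hBr, hBc⟩ := hB
  refine ⟨fun i j => ?_, fun i => ?_, fun j => ?_⟩
  · rw [Matrix.mul_apply]
    exact Finset.sum_nonneg fun k _ => mul_nonneg (hA0 i k) (hB0 k j)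
  · rw [show ∑ j, (A * B) i j = ∑ j, ∑ k, A i k * B k j from by
      simp [Matrix.mul_apply]]
    rw [Finset.sum_comm]
    simp_rw [← Finset.mul_sum, hBr]
    simpa using hAr i
  · rw [show ∑ i, (A * B) i j = ∑ i, ∑ k, A i k * B k j from by
      simp [Matrix.mul_apply]]
    rw [Finset.sum_comm]
    simp_rw [← Finset.sum_mul, hAc]
    simpa using hBc j

theorem ds_transpose {A : Matrix (Fin n) (Fin n) ℝ} (hA : DoublyStochastic A) :
    DoublyStochastic Aᵀ :=
  ⟨fun i j => hA.1 j i, fun i => hA.2.2 i, fun j => hA.2.1 j⟩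

theorem ds_pow {A : Matrix (Fin n) (Fin n) ℝ} (hA : DoublyStochastic A) (k : ℕ) :
    DoublyStochastic (A ^ k) := by
  induction k with
  | zero => simpa using ds_one
  | succ k ih => rw [pow_succ]; exact ds_mul ih hA

theorem ds_half {A B : Matrix (Fin n) (Fin n) ℝ} (hA : DoublyStochastic A)
    (hB : DoublyStochastic B) : DoublyStochastic ((2⁻¹ : ℝ) • (A + B)) := by
  refine ⟨fun i j => ?_, fun i => ?_, fun j => ?_⟩
  · have := hA.1 i j; have := hB.1 i j
    simp only [Matrix.smul_apply, Matrix.add_apply, smul_eq_mul]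
    positivity
  · simp only [Matrix.smul_apply, Matrix.add_apply, smul_eq_mul, ← Finset.mul_sum,
      Finset.sum_add_distrib, hA.2.1 i, hB.2.1 i]
    norm_num
  · simp only [Matrix.smul_apply, Matrix.add_apply, smul_eq_mul, ← Finset.mul_sum,
      Finset.sum_add_distrib, hA.2.2 j, hB.2.2 j]
    norm_num

theorem dot_self_nonneg (u : Fin n → ℝ) : 0 ≤ u ⬝ᵥ u :=
  Finset.sum_nonneg fun i _ => mul_self_nonneg (u i)

/-- Cauchy–Schwarz for `dotProduct`. -/
theorem cs_dot (c u : Fin n → ℝ) : (c ⬝ᵥ u) * (c ⬝ᵥ u) ≤ (c ⬝ᵥ c) * (u ⬝ᵥ u) := by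
  have h := Finset.sum_mul_sq_le_sq_mul_sq Finset.univ c u
  simpa [dotProduct, pow_two] using h

/-- A doubly stochastic matrix is an ℓ²-contraction. -/
theorem ds_contract {M : Matrix (Fin n) (Fin n) ℝ} (hM : DoublyStochastic M)
    (u : Fin n → ℝ) : (M *ᵥ u) ⬝ᵥ (M *ᵥ u) ≤ u ⬝ᵥ u := by
  obtain ⟨h0, hr, hc⟩ := hM
  have key : ∀ i, (M *ᵥ u) i * (M *ᵥ u) i ≤ ∑ j, M i j * (u j * u j) := by
    intro i
    have hcs := Finset.sum_sq_le_sum_mul_sum_of_sq_eq_mul Finset.univ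
      (r := fun j => M i j * u j) (f := fun j => M i j)
      (g := fun j => M i j * (u j * u j))
      (fun j _ => h0 i j) (fun j _ => mul_nonneg (h0 i j) (mul_self_nonneg _))
      (fun j _ => by ring)
    have : (∑ j, M i j * u j) ^ 2 ≤ (∑ j, M i j) * ∑ j, M i j * (u j * u j) := hcs
    rw [hr i, one_mul] at this
    calc (M *ᵥ u) i * (M *ᵥ u) i = (∑ j, M i j * u j) ^ 2 := by
          simp [Matrix.mulVec, dotProduct, pow_two]
      _ ≤ ∑ j, M i j * (u j * u j) := this
  calc (M *ᵥ u) ⬝ᵥ (M *ᵥ u) = ∑ i, (M *ᵥ u) i * (M *ᵥ u) i := rfl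
    _ ≤ ∑ i, ∑ j, M i j * (u j * u j) := Finset.sum_le_sum fun i _ => key i
    _ = ∑ j, (∑ i, M i j) * (u j * u j) := by
        rw [Finset.sum_comm]; simp_rw [Finset.sum_mul]
    _ = u ⬝ᵥ u := by simp_rw [hc]; simp [dotProduct]

theorem eq_of_dot_sub_nonpos {s r : Fin n → ℝ} (h : (s - r) ⬝ᵥ (s - r) ≤ 0) : s = r := by
  have h0 : (s - r) ⬝ᵥ (s - r) = 0 := le_antisymm h (dot_self_nonneg _)
  have := dotProduct_self_eq_zero.mp h0
  exact sub_eq_zero.mp this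

/-- If a doubly stochastic matrix fixes a vector, so does its transpose. -/
theorem fix_transpose {M : Matrix (Fin n) (Fin n) ℝ} (hM : DoublyStochastic M)
    {r : Fin n → ℝ} (hr : M *ᵥ r = r) : Mᵀ *ᵥ r = r := by
  apply eq_of_dot_sub_nonpos
  have h1 : (Mᵀ *ᵥ r) ⬝ᵥ (Mᵀ *ᵥ r) ≤ r ⬝ᵥ r := ds_contract (ds_transpose hM) r
  have h2 : (Mᵀ *ᵥ r) ⬝ᵥ r = r ⬝ᵥ r := by
    rw [dotProduct_comm, Matrix.dotProduct_mulVec,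
      show r ᵥ* Mᵀ = M *ᵥ r from Matrix.vecMul_transpose M r, hr]
  have h3 : r ⬝ᵥ (Mᵀ *ᵥ r) = r ⬝ᵥ r := by rw [dotProduct_comm]; exact h2
  have hexp : (Mᵀ *ᵥ r - r) ⬝ᵥ (Mᵀ *ᵥ r - r)
      = (Mᵀ *ᵥ r) ⬝ᵥ (Mᵀ *ᵥ r) - (Mᵀ *ᵥ r) ⬝ᵥ r - r ⬝ᵥ (Mᵀ *ᵥ r) + r ⬝ᵥ r := by
    simp [sub_dotProduct, dotProduct_sub]; ring
  rw [hexp, h2, h3]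
  linarith

/-- If the midpoint of two DS matrices fixes `r`, then both fix `r`. -/
theorem midpoint_fix {A B : Matrix (Fin n) (Fin n) ℝ} (hA : DoublyStochastic A)
    (hB : DoublyStochastic B) {r : Fin n → ℝ}
    (hr : ((2⁻¹ : ℝ) • (A + B)) *ᵥ r = r) : A *ᵥ r = r ∧ B *ᵥ r = r := by
  have hsum : A *ᵥ r + B *ᵥ r = (2 : ℝ) • r := by
    have := hr
    rw [Matrix.smul_mulVec, Matrix.add_mulVec] at this
    have := congrArg (fun v => (2 : ℝ) • v) this
    simpa [smul_smul] using this
  have dotbound : ∀ (C : Matrix (Fin n) (Fin n) ℝ), DoublyStochastic C →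
      (C *ᵥ r) ⬝ᵥ r ≤ r ⬝ᵥ r := by
    intro C hC
    have hcs := cs_dot (C *ᵥ r) r
    have hcon := ds_contract hC r
    have hrr := dot_self_nonneg r
    have hCr := dot_self_nonneg (C *ᵥ r)
    nlinarith [cs_dot (C *ᵥ r) r]
  have hA' : (A *ᵥ r) ⬝ᵥ r ≤ r ⬝ᵥ r := dotbound A hA
  have hB' : (B *ᵥ r) ⬝ᵥ r ≤ r ⬝ᵥ r := dotbound B hB
  have hsum' : (A *ᵥ r) ⬝ᵥ r + (B *ᵥ r) ⬝ᵥ r = 2 * (r ⬝ᵥ r) := by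
    have := congrArg (fun v => v ⬝ᵥ r) hsum
    simpa [add_dotProduct, smul_dotProduct, two_mul] using this
  have hAr : (A *ᵥ r) ⬝ᵥ r = r ⬝ᵥ r := by linarith
  have hBr : (B *ᵥ r) ⬝ᵥ r = r ⬝ᵥ r := by linarith
  constructor
  · apply eq_of_dot_sub_nonpos
    have hcon := ds_contract hA r
    have hexp : (A *ᵥ r - r) ⬝ᵥ (A *ᵥ r - r)
        = (A *ᵥ r) ⬝ᵥ (A *ᵥ r) - (A *ᵥ r) ⬝ᵥ r - r ⬝ᵥ (A *ᵥ r) + r ⬝ᵥ r := by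
      simp [sub_dotProduct, dotProduct_sub]; ring
    rw [hexp, hAr, dotProduct_comm r (A *ᵥ r), hAr]
    linarith
  · apply eq_of_dot_sub_nonpos
    have hcon := ds_contract hB r
    have hexp : (B *ᵥ r - r) ⬝ᵥ (B *ᵥ r - r)
        = (B *ᵥ r) ⬝ᵥ (B *ᵥ r) - (B *ᵥ r) ⬝ᵥ r - r ⬝ᵥ (B *ᵥ r) + r ⬝ᵥ r := by
      simp [sub_dotProduct, dotProduct_sub]; ring
    rw [hexp, hBr, dotProduct_comm r (B *ᵥ r), hBr]
    linarith

/-- If `δ` is orthogonal to all fixed vectors of the DS matrix `D`,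
then `δ` lies in the range of `1 - D`. -/
theorem exists_preimage {D : Matrix (Fin n) (Fin n) ℝ} (hD : DoublyStochastic D)
    {δ : Fin n → ℝ} (hperp : ∀ r : Fin n → ℝ, D *ᵥ r = r → δ ⬝ᵥ r = 0) :
    ∃ x : Fin n → ℝ, δ = x - D *ᵥ x := by
  classical
  let T : EuclideanSpace ℝ (Fin n) →ₗ[ℝ] EuclideanSpace ℝ (Fin n) :=
    Matrix.toEuclideanLin (1 - D)
  let K : Submodule ℝ (EuclideanSpace ℝ (Fin n)) := LinearMap.range T
  let δE : EuclideanSpace ℝ (Fin n) := (WithLp.equiv 2 (Fin n → ℝ)).symm δ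
  let pr : EuclideanSpace ℝ (Fin n) := (K.orthogonalProjectionOnto δE : EuclideanSpace ℝ (Fin n))
  let r : EuclideanSpace ℝ (Fin n) := δE - pr
  have hrK : r ∈ Kᗮ := K.sub_starProjection_mem_orthogonal δE
  have hinner : ∀ a b : EuclideanSpace ℝ (Fin n),
      (inner ℝ a b : ℝ) = (fun i => a i) ⬝ᵥ (fun i => b i) := by
    intro a b
    simp [PiLp.inner_apply, RCLike.inner_apply, dotProduct, mul_comm]
  let rf : Fin n → ℝ := fun i => r i
  -- r is orthogonal to the range of 1 - D
  have horth : ∀ u : Fin n → ℝ, ((1 - D) *ᵥ u) ⬝ᵥ rf = 0 := by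
    intro u
    have hm : T ((WithLp.equiv 2 (Fin n → ℝ)).symm u) ∈ K := LinearMap.mem_range_self _ _
    have h0 : (inner ℝ (T ((WithLp.equiv 2 (Fin n → ℝ)).symm u)) r : ℝ) = 0 :=
      (Submodule.mem_orthogonal K r).mp hrK _ hm
    rw [hinner] at h0
    have happ : (fun i => (T ((WithLp.equiv 2 (Fin n → ℝ)).symm u)) i)
        = (1 - D) *ᵥ u := by
      funext i
      show (Matrix.toEuclideanLin (1 - D)) ((WithLp.equiv 2 (Fin n → ℝ)).symm u) i
        = ((1 - D) *ᵥ u) i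
      rw [Matrix.toEuclideanLin_apply]
      simp
    rwa [happ] at h0
  -- hence Dᵀ fixes rf
  have hDTr : Dᵀ *ᵥ rf = rf := by
    have key : ∀ u : Fin n → ℝ, u ⬝ᵥ (Dᵀ *ᵥ rf - rf) = 0 := by
      intro u
      have h1 := horth u
      rw [Matrix.sub_mulVec, Matrix.one_mulVec, sub_dotProduct] at h1
      have h2 : (D *ᵥ u) ⬝ᵥ rf = u ⬝ᵥ (Dᵀ *ᵥ rf) := by
        rw [dotProduct_comm, Matrix.dotProduct_mulVec,
          show rf ᵥ* D = Dᵀ *ᵥ rf from (Matrix.mulVec_transpose D rf).symm,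
          dotProduct_comm]
      rw [dotProduct_sub]
      rw [h2] at h1
      linarith
    have := key (Dᵀ *ᵥ rf - rf)
    have h0 := dotProduct_self_eq_zero.mp this
    exact sub_eq_zero.mp h0
  have hDr : D *ᵥ rf = rf := by
    have := fix_transpose (ds_transpose hD) hDTr
    rwa [Matrix.transpose_transpose] at this
  have hδr : δ ⬝ᵥ rf = 0 := hperp rf hDr
  -- projection is orthogonal to r
  have hpr0 : (inner ℝ pr r : ℝ) = 0 := by
    have hmem : pr ∈ K := SetLike.coe_mem _
    exact (Submodule.mem_orthogonal K r).mp hrK pr hmem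
  have hrr : (inner ℝ r r : ℝ) = 0 := by
    have hsplit : (inner ℝ r r : ℝ) = (inner ℝ δE r : ℝ) - (inner ℝ pr r : ℝ) := by
      show (inner ℝ (δE - pr) r : ℝ) = _
      rw [inner_sub_left]
    rw [hsplit, hpr0, sub_zero, hinner]
    exact hδr
  have hr0 : r = 0 := inner_self_eq_zero.mp hrr
  have hδK : δE ∈ K := by
    have heq : δE = pr := by
      have := sub_eq_zero.mp hr0
      exact this
    rw [heq]; exact SetLike.coe_mem _
  obtain ⟨u, hu⟩ := hδK
  refine ⟨(WithLp.equiv 2 (Fin n → ℝ)) u, ?_⟩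
  have hTu : (WithLp.equiv 2 (Fin n → ℝ)) (T u)
      = (1 - D) *ᵥ ((WithLp.equiv 2 (Fin n → ℝ)) u) := by
    show (WithLp.equiv 2 (Fin n → ℝ)) ((Matrix.toEuclideanLin (1 - D)) u) = _
    rw [Matrix.toEuclideanLin_apply]
    rfl
  have hδu : δ = (1 - D) *ᵥ ((WithLp.equiv 2 (Fin n → ℝ)) u) := by
    rw [← hTu, hu]
    rfl
  rw [hδu, Matrix.sub_mulVec, Matrix.one_mulVec]

/-- The analytic core: no vector functional can uniformly separate the two branches. -/
theorem core {A B : Matrix (Fin n) (Fin n) ℝ} (hA : DoublyStochastic A)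
    (hB : DoublyStochastic B) (v0 c : Fin n → ℝ) {γ : ℝ} (hγ : 0 < γ)
    (h : ∀ w : List Bool,
      γ ≤ c ⬝ᵥ ((w.foldr (fun b M => M * (cond b A B)) (1 : Matrix (Fin n) (Fin n) ℝ)) *ᵥ
        (A *ᵥ v0 - B *ᵥ v0))) : False := by
  classical
  set D : Matrix (Fin n) (Fin n) ℝ := (2⁻¹ : ℝ) • (A + B) with hDdef
  have hD : DoublyStochastic D := ds_half hA hB
  set δ : Fin n → ℝ := A *ᵥ v0 - B *ᵥ v0 with hδdef
  -- step 1: γ ≤ c ⬝ᵥ (D^k *ᵥ δ) for all k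
  have step1 : ∀ k : ℕ, γ ≤ c ⬝ᵥ ((D ^ k) *ᵥ δ) := by
    have main : ∀ (k : ℕ) (u : Fin n → ℝ),
        (∀ w : List Bool,
          γ ≤ c ⬝ᵥ ((w.foldr (fun b M => M * (cond b A B))
            (1 : Matrix (Fin n) (Fin n) ℝ)) *ᵥ u)) →
        γ ≤ c ⬝ᵥ ((D ^ k) *ᵥ u) := by
      intro k
      induction k with
      | zero =>
        intro u hu
        have := hu []
        simpa using this
      | succ k ih =>
        intro u hu
        have hDu : (D ^ (k + 1)) *ᵥ u = (D ^ k) *ᵥ (D *ᵥ u) := by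
          rw [pow_succ, ← Matrix.mulVec_mulVec]
        rw [hDu]
        apply ih
        intro w
        set Tw := w.foldr (fun b M => M * (cond b A B))
          (1 : Matrix (Fin n) (Fin n) ℝ) with hTw
        have hsplit : Tw *ᵥ (D *ᵥ u)
            = (2⁻¹ : ℝ) • ((Tw * A) *ᵥ u + (Tw * B) *ᵥ u) := by
          rw [Matrix.mulVec_mulVec]
          rw [hDdef, Matrix.mul_smul, mul_add, Matrix.smul_mulVec,
            Matrix.add_mulVec]
        have h1 : γ ≤ c ⬝ᵥ ((Tw * A) *ᵥ u) := by
          have := hu (true :: w)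
          simpa [List.foldr] using this
        have h2 : γ ≤ c ⬝ᵥ ((Tw * B) *ᵥ u) := by
          have := hu (false :: w)
          simpa [List.foldr] using this
        rw [hsplit]
        rw [dotProduct_smul, dotProduct_add]
        have : γ = (2⁻¹ : ℝ) * (γ + γ) := by ring
        rw [this]
        have := add_le_add h1 h2
        simp only [smul_eq_mul]
        nlinarith
    intro k
    exact main k δ h
  -- step 2: δ ∈ range (1 - D)
  have hperp : ∀ r : Fin n → ℝ, D *ᵥ r = r → δ ⬝ᵥ r = 0 := by
    intro r hr
    obtain ⟨hAr, hBr⟩ := midpoint_fix hA hB hr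
    have hATr : Aᵀ *ᵥ r = r := fix_transpose hA hAr
    have hBTr : Bᵀ *ᵥ r = r := fix_transpose hB hBr
    have hAv : (A *ᵥ v0) ⬝ᵥ r = v0 ⬝ᵥ r := by
      rw [dotProduct_comm, Matrix.dotProduct_mulVec,
        show r ᵥ* A = Aᵀ *ᵥ r from (Matrix.mulVec_transpose A r).symm, hATr,
        dotProduct_comm]
    have hBv : (B *ᵥ v0) ⬝ᵥ r = v0 ⬝ᵥ r := by
      rw [dotProduct_comm, Matrix.dotProduct_mulVec,
        show r ᵥ* B = Bᵀ *ᵥ r from (Matrix.mulVec_transpose B r).symm, hBTr,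
        dotProduct_comm]
    rw [hδdef, sub_dotProduct, hAv, hBv, sub_self]
  obtain ⟨x0, hx0⟩ := exists_preimage hD hperp
  -- step 3: telescoping
  have tele : ∀ k : ℕ, (D ^ k) *ᵥ δ = (D ^ k) *ᵥ x0 - (D ^ (k + 1)) *ᵥ x0 := by
    intro k
    rw [hx0, Matrix.mulVec_sub]
    congr 1
    rw [pow_succ, Matrix.mulVec_mulVec]
  set X : ℝ := x0 ⬝ᵥ x0 with hX
  have hXnn : 0 ≤ X := dot_self_nonneg x0
  set Cc : ℝ := c ⬝ᵥ c with hCc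
  have hCcnn : 0 ≤ Cc := dot_self_nonneg c
  set Cb : ℝ := Real.sqrt (Cc * X) with hCb
  have hCbnn : 0 ≤ Cb := Real.sqrt_nonneg _
  have hbound : ∀ k : ℕ, |c ⬝ᵥ ((D ^ k) *ᵥ x0)| ≤ Cb := by
    intro k
    have hcon : ((D ^ k) *ᵥ x0) ⬝ᵥ ((D ^ k) *ᵥ x0) ≤ X := ds_contract (ds_pow hD k) x0
    have hcs := cs_dot c ((D ^ k) *ᵥ x0)
    have h2 : (c ⬝ᵥ ((D ^ k) *ᵥ x0)) * (c ⬝ᵥ ((D ^ k) *ᵥ x0)) ≤ Cc * X := by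
      calc (c ⬝ᵥ ((D ^ k) *ᵥ x0)) * (c ⬝ᵥ ((D ^ k) *ᵥ x0))
          ≤ Cc * (((D ^ k) *ᵥ x0) ⬝ᵥ ((D ^ k) *ᵥ x0)) := hcs
        _ ≤ Cc * X := by exact mul_le_mul_of_nonneg_left hcon hCcnn
    have : |c ⬝ᵥ ((D ^ k) *ᵥ x0)| = Real.sqrt ((c ⬝ᵥ ((D ^ k) *ᵥ x0)) *
        (c ⬝ᵥ ((D ^ k) *ᵥ x0))) := by
      rw [← Real.sqrt_mul_self (abs_nonneg _)]
      congr 1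
      rw [abs_mul_abs_self]
    rw [this, hCb]
    exact Real.sqrt_le_sqrt h2
  -- sum over range N
  have hsum : ∀ N : ℕ, (N : ℝ) * γ ≤ 2 * Cb := by
    intro N
    have htsum : ∑ k ∈ Finset.range N, c ⬝ᵥ ((D ^ k) *ᵥ δ)
        = c ⬝ᵥ ((D ^ 0) *ᵥ x0) - c ⬝ᵥ ((D ^ N) *ᵥ x0) := by
      have : ∀ k, c ⬝ᵥ ((D ^ k) *ᵥ δ)
          = (fun k => c ⬝ᵥ ((D ^ k) *ᵥ x0)) k - (fun k => c ⬝ᵥ ((D ^ k) *ᵥ x0)) (k + 1) := by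
        intro k
        rw [tele k, dotProduct_sub]
      simp_rw [this]
      exact Finset.sum_range_sub' (fun k => c ⬝ᵥ ((D ^ k) *ᵥ x0)) N
    have hlow : (N : ℝ) * γ ≤ ∑ k ∈ Finset.range N, c ⬝ᵥ ((D ^ k) *ᵥ δ) := by
      have := Finset.card_nsmul_le_sum (Finset.range N)
        (fun k => c ⬝ᵥ ((D ^ k) *ᵥ δ)) γ (fun k _ => step1 k)
      simpa [nsmul_eq_mul] using this
    have h0 := hbound 0
    have hN := hbound N
    have := htsum
    calc (N : ℝ) * γ ≤ ∑ k ∈ Finset.range N, c ⬝ᵥ ((D ^ k) *ᵥ δ) := hlow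
      _ = c ⬝ᵥ ((D ^ 0) *ᵥ x0) - c ⬝ᵥ ((D ^ N) *ᵥ x0) := htsum
      _ ≤ |c ⬝ᵥ ((D ^ 0) *ᵥ x0)| + |c ⬝ᵥ ((D ^ N) *ᵥ x0)| := by
          have := abs_sub_abs_le_abs_sub (c ⬝ᵥ ((D ^ 0) *ᵥ x0)) (c ⬝ᵥ ((D ^ N) *ᵥ x0))
          have h1 := le_abs_self (c ⬝ᵥ ((D ^ 0) *ᵥ x0))
          have h2 := neg_abs_le (c ⬝ᵥ ((D ^ N) *ᵥ x0))
          linarith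
      _ ≤ 2 * Cb := by linarith
  obtain ⟨N, hN⟩ := exists_nat_gt (2 * Cb / γ)
  have := hsum N
  have h2 : 2 * Cb / γ * γ < (N : ℝ) * γ := by
    exact mul_lt_mul_of_pos_right hN hγ
  rw [div_mul_cancel₀ _ (ne_of_gt hγ)] at h2
  linarith

end PRACAux

/- ### Word matrices for a PRA-C -/

namespace PRACWord

open Matrix

variable {α : Type}

/-- The matrix of a word (letters applied left to right). -/
def wordMat (P : PRAC α) (l : List α) : Matrix (Fin P.n) (Fin P.n) ℝ :=
  l.foldr (fun a M => M * P.V a) 1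

theorem wordMat_nil (P : PRAC α) : wordMat P [] = 1 := rfl

theorem wordMat_cons (P : PRAC α) (a : α) (l : List α) :
    wordMat P (a :: l) = wordMat P l * P.V a := rfl

theorem wordMat_ds (P : PRAC α) (l : List α) : DoublyStochastic (wordMat P l) := by
  induction l with
  | nil => exact PRACAux.ds_one
  | cons a l ih => rw [wordMat_cons]; exact PRACAux.ds_mul ih (P.ds a)

theorem foldr_mul (P : PRAC α) (l : List α) (X : Matrix (Fin P.n) (Fin P.n) ℝ) :
    l.foldr (fun a M => M * P.V a) X = X * wordMat P l := by
  induction l with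
  | nil => simp [wordMat_nil]
  | cons a l ih =>
    simp only [List.foldr_cons, ih, wordMat_cons, Matrix.mul_assoc]

theorem wordMat_append (P : PRAC α) (l₁ l₂ : List α) :
    wordMat P (l₁ ++ l₂) = wordMat P l₂ * wordMat P l₁ := by
  rw [wordMat, List.foldr_append]
  exact foldr_mul P l₁ (wordMat P l₂)

theorem foldl_eq (P : PRAC α) (l : List α) (v : Fin P.n → ℝ) :
    l.foldl (fun v a => (P.V a).mulVec v) v = (wordMat P l) *ᵥ v := by
  induction l generalizing v with
  | nil => simp [wordMat_nil]
  | cons a l ih =>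
    rw [List.foldl_cons, ih, wordMat_cons, Matrix.mulVec_mulVec]

/-- Decomposition of the acceptance probability of `ω ++ (s ++ z)`. -/
theorem accProb_decomp (P : PRAC α) (ω s z : List α) :
    P.accProb (ω ++ (s ++ z))
      = (fun j => ∑ q ∈ P.F, (P.Vdollar * wordMat P z) q j) ⬝ᵥ
        ((wordMat P s) *ᵥ ((wordMat P ω) *ᵥ (P.Vhash *ᵥ (Pi.single P.q0 1)))) := by
  rw [PRAC.accProb]
  rw [List.foldl_append, List.foldl_append]
  rw [foldl_eq, foldl_eq, foldl_eq]
  set u := (wordMat P s) *ᵥ ((wordMat P ω) *ᵥ (P.Vhash *ᵥ (Pi.single P.q0 1))) with hu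
  rw [show P.Vdollar *ᵥ (wordMat P z *ᵥ u) = (P.Vdollar * wordMat P z) *ᵥ u from
    Matrix.mulVec_mulVec u P.Vdollar (wordMat P z)]
  rw [dotProduct]
  simp only [Matrix.mulVec, dotProduct]
  rw [Finset.sum_comm]
  congr 1
  funext j
  rw [Finset.sum_mul]

end PRACWord

open Matrix PRACWord in
/-- Core lemma: type `(*')` structure with `q1z` accepting and `q2z` rejecting is
incompatible with PRA-C recognition. -/
theorem prac_aux_main {α σ : Type} [Fintype σ]
    (L : Set (List α)) (D : DFA α σ) (hD : ∀ w, w ∈ D.accepts ↔ w ∈ L)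
    (q q1 q2 : σ) (ω x y z : List α)
    (hω : D.evalFrom D.start ω = q)
    (hqx : D.evalFrom q x = q1) (hqy : D.evalFrom q y = q2)
    (h1x : D.evalFrom q1 x = q1) (h1y : D.evalFrom q1 y = q1)
    (h2x : D.evalFrom q2 x = q2) (h2y : D.evalFrom q2 y = q2)
    (hacc1 : D.evalFrom q1 z ∈ D.accept) (hacc2 : D.evalFrom q2 z ∉ D.accept)
    (P : PRAC α) (p1 p2 : ℝ) (hrec : P.Recognizes L p1 p2) : False := by
  classical
  obtain ⟨hp1, hp12, hp2, hin, hout⟩ := hrec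
  set A := wordMat P x with hA
  set B := wordMat P y with hB
  set v0 := (wordMat P ω) *ᵥ (P.Vhash *ᵥ (Pi.single P.q0 1)) with hv0
  set c : Fin P.n → ℝ := fun j => ∑ r ∈ P.F, (P.Vdollar * wordMat P z) r j with hc
  -- flattened boolean words
  let flat : List Bool → List α := fun w => (w.map fun b => cond b x y).flatten
  have flat_nil : flat [] = [] := rfl
  have flat_cons : ∀ b w, flat (b :: w) = (cond b x y) ++ flat w := by
    intro b w; simp [flat]
  -- DFA absorption
  have habs1 : ∀ w : List Bool, D.evalFrom q1 (flat w) = q1 := by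
    intro w
    induction w with
    | nil => simp [flat]
    | cons b w ih =>
      rw [flat_cons, DFA.evalFrom_of_append]
      cases b
      · simp only [cond_false, h1y]; exact ih
      · simp only [cond_true, h1x]; exact ih
  have habs2 : ∀ w : List Bool, D.evalFrom q2 (flat w) = q2 := by
    intro w
    induction w with
    | nil => simp [flat]
    | cons b w ih =>
      rw [flat_cons, DFA.evalFrom_of_append]
      cases b
      · simp only [cond_false, h2y]; exact ih
      · simp only [cond_true, h2x]; exact ih
  -- membership facts
  have hmem1 : ∀ w : List Bool, (ω ++ ((x ++ flat w) ++ z)) ∈ L := by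
    intro w
    rw [← hD]
    rw [DFA.mem_accepts]
    show D.evalFrom D.start _ ∈ D.accept
    rw [DFA.evalFrom_of_append, hω, DFA.evalFrom_of_append, DFA.evalFrom_of_append,
      hqx, habs1]
    exact hacc1
  have hmem2 : ∀ w : List Bool, (ω ++ ((y ++ flat w) ++ z)) ∉ L := by
    intro w
    rw [← hD]
    rw [DFA.mem_accepts]
    show ¬ D.evalFrom D.start _ ∈ D.accept
    rw [DFA.evalFrom_of_append, hω, DFA.evalFrom_of_append, DFA.evalFrom_of_append,
      hqy, habs2]
    exact hacc2
  -- wordMat of flattened words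
  have hflatmat : ∀ w : List Bool,
      wordMat P (flat w) = w.foldr (fun b M => M * (cond b A B)) 1 := by
    intro w
    induction w with
    | nil => rfl
    | cons b w ih =>
      rw [flat_cons, wordMat_append, List.foldr_cons, ih]
      congr 1
      cases b
      · rfl
      · rfl
  -- acceptance probabilities
  have haccval : ∀ (s : List α),
      P.accProb (ω ++ (s ++ z)) = c ⬝ᵥ ((wordMat P s) *ᵥ v0) :=
    fun s => accProb_decomp P ω s z
  have key : ∀ w : List Bool,
      (p2 - p1) ≤ c ⬝ᵥ ((w.foldr (fun b M => M * (cond b A B)) 1) *ᵥ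
        (A *ᵥ v0 - B *ᵥ v0)) := by
    intro w
    set Tw := w.foldr (fun b M => M * (cond b A B))
      (1 : Matrix (Fin P.n) (Fin P.n) ℝ) with hTw
    have h1 : p2 ≤ c ⬝ᵥ (Tw *ᵥ (A *ᵥ v0)) := by
      have hm := hin _ (hmem1 w)
      rw [haccval (x ++ flat w)] at hm
      rw [wordMat_append, hflatmat] at hm
      rw [← Matrix.mulVec_mulVec] at hm
      exact hm
    have h2 : c ⬝ᵥ (Tw *ᵥ (B *ᵥ v0)) ≤ p1 := by
      have hm := hout _ (hmem2 w)
      rw [haccval (y ++ flat w)] at hm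
      rw [wordMat_append, hflatmat] at hm
      rw [← Matrix.mulVec_mulVec] at hm
      exact hm
    rw [Matrix.mulVec_sub, dotProduct_sub]
    linarith
  exact PRACAux.core (wordMat_ds P x) (wordMat_ds P y) v0 c (by linarith) key

/-- If a regular language is of type `(*')`, it is not recognizable by any PRA-C. -/
theorem typeStar'_not_recognizable_by_prac {α σ : Type} [Fintype σ]
    (L : Set (List α)) (D : DFA α σ) (hD : ∀ w, w ∈ D.accepts ↔ w ∈ L)
    (q q1 q2 : σ) (ω x y z : List α)
    (hω : D.evalFrom D.start ω = q)
    (hqx : D.evalFrom q x = q1) (hqy : D.evalFrom q y = q2)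
    (h1x : D.evalFrom q1 x = q1) (h1y : D.evalFrom q1 y = q1)
    (h2x : D.evalFrom q2 x = q2) (h2y : D.evalFrom q2 y = q2)
    (hz : Xor' (D.evalFrom q1 z ∈ D.accept) (D.evalFrom q2 z ∈ D.accept)) :
    ¬ ∃ (A : PRAC α) (p1 p2 : ℝ), A.Recognizes L p1 p2 := by
  rintro ⟨P, p1, p2, hrec⟩
  rcases hz with ⟨hacc1, hacc2⟩ | ⟨hacc2, hacc1⟩
  · exact prac_aux_main L D hD q q1 q2 ω x y z hω hqx hqy h1x h1y h2x h2y
      hacc1 hacc2 P p1 p2 hrec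
  · exact prac_aux_main L D hD q q2 q1 ω y x z hω hqy hqx h2y h2x h1y h1x
      hacc2 hacc1 P p1 p2 hrec
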